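/- For matrices, the γ₂ factorization norm of a vertical concatenation is bounded by the ℓ₂ combination of the parts: if a set system F over a ground set P is the union F = F₁ ∪ ... ∪ F_k of set systems F₁,...,F_k over P, then γ₂(F) ≤ sqrt(γ₂(F₁)² + ... + γ₂(F_k)²). -/

import Mathlib

open scoped BigOperators

/-- Maximum ℓ₂ norm of a row of `U` (the `‖·‖_{2→∞}` norm). -/
noncomputable def rowMax {α : Type*} [Fintype α] {r : ℕ} (U : Matrix α (Fin r) ℝ) : ℝ :=
  ⨆ i, Real.sqrt (∑ j, (U i j) ^ 2)

/-- Maximum ℓ₂ norm of a column of `V` (the `‖·‖_{1→2}` norm). -/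
noncomputable def colMax {β : Type*} [Fintype β] {r : ℕ} (V : Matrix (Fin r) β ℝ) : ℝ :=
  ⨆ j, Real.sqrt (∑ i, (V i j) ^ 2)

/-- The γ₂ factorization norm of a real matrix. -/
noncomputable def gamma2 {α β : Type*} [Fintype α] [Fintype β] (A : Matrix α β ℝ) : ℝ :=
  sInf {t : ℝ | ∃ (r : ℕ) (U : Matrix α (Fin r) ℝ) (V : Matrix (Fin r) β ℝ),
    A = U * V ∧ t = rowMax U * colMax V}

/-- The 0/1 incidence matrix of a set system: rows indexed by sets, columns by points. -/
noncomputable def incidenceMatrix {α : Type*} [Fintype α] [DecidableEq α]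
    (F : Finset (Finset α)) : Matrix {S // S ∈ F} α ℝ :=
  Matrix.of fun S p => if p ∈ S.1 then (1 : ℝ) else 0

/-- γ₂ of a set system is γ₂ of its incidence matrix. -/
noncomputable def gamma2Sys {α : Type*} [Fintype α] [DecidableEq α]
    (F : Finset (Finset α)) : ℝ :=
  gamma2 (incidenceMatrix F)

lemma rowMax_nonneg {α : Type*} [Fintype α] {r : ℕ} (U : Matrix α (Fin r) ℝ) :
    0 ≤ rowMax U := Real.iSup_nonneg fun _ => Real.sqrt_nonneg _

lemma colMax_nonneg {β : Type*} [Fintype β] {r : ℕ} (V : Matrix (Fin r) β ℝ) :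
    0 ≤ colMax V := Real.iSup_nonneg fun _ => Real.sqrt_nonneg _

lemma sqrt_row_le_rowMax {α : Type*} [Fintype α] {r : ℕ} (U : Matrix α (Fin r) ℝ) (i : α) :
    Real.sqrt (∑ j, (U i j) ^ 2) ≤ rowMax U :=
  le_ciSup ((Set.finite_range fun i => Real.sqrt (∑ j, (U i j) ^ 2)).bddAbove) i

lemma sqrt_col_le_colMax {β : Type*} [Fintype β] {r : ℕ} (V : Matrix (Fin r) β ℝ) (p : β) :
    Real.sqrt (∑ i, (V i p) ^ 2) ≤ colMax V :=
  le_ciSup ((Set.finite_range fun p => Real.sqrt (∑ i, (V i p) ^ 2)).bddAbove) p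

/-- Normalization: any factorization can be rescaled so the row factor has norm ≤ 1. -/
lemma exists_normalized {α β : Type*} [Fintype α] [Fintype β] (A : Matrix α β ℝ)
    {r : ℕ} (U : Matrix α (Fin r) ℝ) (V : Matrix (Fin r) β ℝ) (h : A = U * V) :
    ∃ (r' : ℕ) (U' : Matrix α (Fin r') ℝ) (V' : Matrix (Fin r') β ℝ),
      A = U' * V' ∧ rowMax U' ≤ 1 ∧ colMax V' ≤ rowMax U * colMax V := by
  rcases eq_or_lt_of_le (rowMax_nonneg U) with hu | hu
  · -- rowMax U = 0, so A = 0
    have hU : ∀ i j, U i j = 0 := by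
      intro i j
      have h1 : Real.sqrt (∑ j, (U i j) ^ 2) ≤ 0 := hu ▸ sqrt_row_le_rowMax U i
      have h2 : (∑ j, (U i j) ^ 2) = 0 := by
        have hnn : (0:ℝ) ≤ ∑ j, (U i j) ^ 2 := Finset.sum_nonneg fun _ _ => sq_nonneg _
        have := Real.sqrt_eq_zero'.mp (le_antisymm h1 (Real.sqrt_nonneg _))
        linarith
      have := (Finset.sum_eq_zero_iff_of_nonneg (fun j _ => sq_nonneg (U i j))).mp h2 j
        (Finset.mem_univ j)
      exact pow_eq_zero_iff two_ne_zero |>.mp this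
    refine ⟨0, 0, 0, ?_, ?_, ?_⟩
    · ext i p
      simp only [Matrix.mul_apply, Finset.univ_eq_empty, Finset.sum_empty]
      rw [h, Matrix.mul_apply]
      exact Finset.sum_eq_zero fun j _ => by rw [hU i j, zero_mul]
    · exact Real.iSup_le (fun i => by simp) zero_le_one
    · have : (0:ℝ) = rowMax U * colMax V := by rw [← hu, zero_mul]
      rw [← this]
      exact Real.iSup_le (fun p => by simp) le_rfl
  · -- rowMax U > 0
    set u := rowMax U with hudef
    refine ⟨r, fun i j => u⁻¹ * U i j, fun j p => u * V j p, ?_, ?_, ?_⟩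
    · ext i p
      rw [h]
      simp only [Matrix.mul_apply]
      apply Finset.sum_congr rfl
      intro j _
      field_simp
    · apply Real.iSup_le _ zero_le_one
      intro i
      have : ∑ j, (u⁻¹ * U i j) ^ 2 = u⁻¹ ^ 2 * ∑ j, (U i j) ^ 2 := by
        rw [Finset.mul_sum]; exact Finset.sum_congr rfl fun j _ => by ring
      rw [this, Real.sqrt_mul (sq_nonneg _), Real.sqrt_sq (inv_nonneg.mpr hu.le)]
      calc u⁻¹ * Real.sqrt (∑ j, (U i j) ^ 2) ≤ u⁻¹ * u :=
            mul_le_mul_of_nonneg_left (sqrt_row_le_rowMax U i) (inv_nonneg.mpr hu.le)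
        _ = 1 := inv_mul_cancel₀ (ne_of_gt hu)
    · apply Real.iSup_le _ (mul_nonneg (rowMax_nonneg U) (colMax_nonneg V))
      intro p
      have : ∑ j, (u * V j p) ^ 2 = u ^ 2 * ∑ j, (V j p) ^ 2 := by
        rw [Finset.mul_sum]; exact Finset.sum_congr rfl fun j _ => by ring
      rw [this, Real.sqrt_mul (sq_nonneg _), Real.sqrt_sq hu.le]
      exact mul_le_mul_of_nonneg_left (sqrt_col_le_colMax V p) hu.le

/-- The γ₂ factorization set is nonempty. -/
lemma gamma2_set_nonempty {α β : Type*} [Fintype α] [Fintype β] [DecidableEq β]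
    (A : Matrix α β ℝ) :
    {t : ℝ | ∃ (r : ℕ) (U : Matrix α (Fin r) ℝ) (V : Matrix (Fin r) β ℝ),
      A = U * V ∧ t = rowMax U * colMax V}.Nonempty := by
  classical
  set e := Fintype.equivFin β
  refine ⟨_, Fintype.card β, fun i j => A i (e.symm j), fun j p => if j = e p then 1 else 0,
    ?_, rfl⟩
  ext i p
  show A i p = ∑ j, A i (e.symm j) * (if j = e p then (1:ℝ) else 0)
  simp only [mul_ite, mul_one, mul_zero]
  rw [Finset.sum_ite_eq' Finset.univ (e p)]
  simp

lemma gamma2_nonneg {α β : Type*} [Fintype α] [Fintype β] (A : Matrix α β ℝ) :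
    0 ≤ gamma2 A := by
  apply Real.sInf_nonneg
  rintro x ⟨r, U, V, -, rfl⟩
  exact mul_nonneg (rowMax_nonneg U) (colMax_nonneg V)

lemma gamma2_bddBelow {α β : Type*} [Fintype α] [Fintype β] (A : Matrix α β ℝ) :
    BddBelow {t : ℝ | ∃ (r : ℕ) (U : Matrix α (Fin r) ℝ) (V : Matrix (Fin r) β ℝ),
      A = U * V ∧ t = rowMax U * colMax V} := by
  refine ⟨0, ?_⟩
  rintro x ⟨r, U, V, -, rfl⟩
  exact mul_nonneg (rowMax_nonneg U) (colMax_nonneg V)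


/-- If a set system `F` is the union `F = F₁ ∪ ⋯ ∪ F_k` of set systems over the same ground
set, then `γ₂(F) ≤ sqrt (γ₂(F₁)² + ⋯ + γ₂(F_k)²)`. -/
theorem gamma2_union_le {α : Type*} [Fintype α] [DecidableEq α] {k : ℕ}
    (G : Fin k → Finset (Finset α)) (F : Finset (Finset α))
    (hF : F = Finset.univ.biUnion G) :
    gamma2Sys F ≤ Real.sqrt (∑ i, (gamma2Sys (G i)) ^ 2) := by
  classical
  set γ : Fin k → ℝ := fun i => gamma2Sys (G i) with hγdef
  have hγ0 : ∀ i, 0 ≤ γ i := fun i => gamma2_nonneg _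
  have key : ∀ δ : ℝ, 0 < δ → gamma2Sys F ≤ Real.sqrt (∑ i, (γ i + δ) ^ 2) := by
    intro δ hδ
    -- pick near-optimal normalized factorizations
    have H : ∀ i : Fin k, ∃ (r : ℕ) (U : Matrix {S // S ∈ G i} (Fin r) ℝ)
        (V : Matrix (Fin r) α ℝ),
        incidenceMatrix (G i) = U * V ∧ rowMax U ≤ 1 ∧ colMax V ≤ γ i + δ := by
      intro i
      obtain ⟨t, ht, htlt⟩ := Real.lt_sInf_add_pos (gamma2_set_nonempty (incidenceMatrix (G i))) hδ
      obtain ⟨r, U, V, hUV, rfl⟩ := ht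
      obtain ⟨r', U', V', h1, h2, h3⟩ := exists_normalized _ U V hUV
      exact ⟨r', U', V', h1, h2, le_trans h3 htlt.le⟩
    choose rr Uu Vv hfac hrow hcol using H
    -- choose an index for each set in F
    have hmem : ∀ S : {S // S ∈ F}, ∃ i, S.1 ∈ G i := by
      intro S
      obtain ⟨i, -, hi⟩ := Finset.mem_biUnion.mp (by rw [← hF]; exact S.2)
      exact ⟨i, hi⟩
    choose iS hiS using hmem
    -- build big factorization
    set ι := (Σ i : Fin k, Fin (rr i)) with hι
    set e : ι ≃ Fin (Fintype.card ι) := Fintype.equivFin ι with he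
    set U' : {S // S ∈ F} → ι → ℝ := fun S x =>
      if h : S.1 ∈ G x.1 then (if x.1 = iS S then Uu x.1 ⟨S.1, h⟩ x.2 else 0) else 0 with hU'
    set V' : ι → α → ℝ := fun x p => Vv x.1 x.2 p with hV'
    set Ubig : Matrix {S // S ∈ F} (Fin (Fintype.card ι)) ℝ := fun S j => U' S (e.symm j)
      with hUbig
    set Vbig : Matrix (Fin (Fintype.card ι)) α ℝ := fun j p => V' (e.symm j) p with hVbig
    -- key row computation
    have hrowsum : ∀ (S : {S // S ∈ F}) (f : ℝ → ℝ), f 0 = 0 →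
        ∑ x : ι, f (U' S x) = ∑ j : Fin (rr (iS S)), f (Uu (iS S) ⟨S.1, hiS S⟩ j) := by
      intro S f hf0
      rw [← Finset.univ_sigma_univ, Finset.sum_sigma]
      rw [Finset.sum_eq_single (iS S)]
      · apply Finset.sum_congr rfl
        intro j _
        have : U' S ⟨iS S, j⟩ = Uu (iS S) ⟨S.1, hiS S⟩ j := by
          simp [hU', hiS S]
        rw [this]
      · intro i _ hne
        apply Finset.sum_eq_zero
        intro j _
        have : U' S ⟨i, j⟩ = 0 := by simp [hU', hne]
        rw [this, hf0]
      · intro h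
        exact absurd (Finset.mem_univ _) h
    -- factorization identity
    have hfact : incidenceMatrix F = Ubig * Vbig := by
      ext S p
      rw [Matrix.mul_apply]
      have : ∑ j : Fin (Fintype.card ι), Ubig S j * Vbig j p
          = ∑ x : ι, U' S x * V' x p := Equiv.sum_comp e.symm fun x => U' S x * V' x p
      rw [this]
      have : ∑ x : ι, U' S x * V' x p
          = ∑ j : Fin (rr (iS S)), Uu (iS S) ⟨S.1, hiS S⟩ j * Vv (iS S) j p := by
        rw [← Finset.univ_sigma_univ, Finset.sum_sigma]
        rw [Finset.sum_eq_single (iS S)]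
        · apply Finset.sum_congr rfl
          intro j _
          have : U' S ⟨iS S, j⟩ = Uu (iS S) ⟨S.1, hiS S⟩ j := by
            simp [hU', hiS S]
          rw [this]
        · intro i _ hne
          apply Finset.sum_eq_zero
          intro j _
          have : U' S ⟨i, j⟩ = 0 := by simp [hU', hne]
          rw [this, zero_mul]
        · intro h
          exact absurd (Finset.mem_univ _) h
      rw [this, ← Matrix.mul_apply, ← hfac (iS S)]
      simp [incidenceMatrix]
    -- row bound
    have hrowb : rowMax Ubig ≤ 1 := by
      apply Real.iSup_le _ zero_le_one
      intro S
      have h1 : ∑ j : Fin (Fintype.card ι), (Ubig S j) ^ 2 = ∑ x : ι, (U' S x) ^ 2 :=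
        Equiv.sum_comp e.symm fun x => (U' S x) ^ 2
      have h2 := hrowsum S (fun t => t ^ 2) (by norm_num)
      rw [h1, h2]
      exact le_trans (sqrt_row_le_rowMax (Uu (iS S)) ⟨S.1, hiS S⟩) (hrow (iS S))
    -- column bound
    have hcolb : colMax Vbig ≤ Real.sqrt (∑ i, (γ i + δ) ^ 2) := by
      apply Real.iSup_le _ (Real.sqrt_nonneg _)
      intro p
      have h1 : ∑ j : Fin (Fintype.card ι), (Vbig j p) ^ 2 = ∑ x : ι, (V' x p) ^ 2 :=
        Equiv.sum_comp e.symm fun x => (V' x p) ^ 2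
      rw [h1]
      apply Real.sqrt_le_sqrt
      rw [← Finset.univ_sigma_univ, Finset.sum_sigma]
      apply Finset.sum_le_sum
      intro i _
      have hs : ∑ j : Fin (rr i), (Vv i j p) ^ 2
          = (Real.sqrt (∑ j : Fin (rr i), (Vv i j p) ^ 2)) ^ 2 :=
        (Real.sq_sqrt (Finset.sum_nonneg fun _ _ => sq_nonneg _)).symm
      calc ∑ j : Fin (rr i), (V' ⟨i, j⟩ p) ^ 2 = ∑ j : Fin (rr i), (Vv i j p) ^ 2 := rfl
        _ = (Real.sqrt (∑ j : Fin (rr i), (Vv i j p) ^ 2)) ^ 2 := hs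
        _ ≤ (γ i + δ) ^ 2 := by
            apply pow_le_pow_left₀ (Real.sqrt_nonneg _)
            exact le_trans (sqrt_col_le_colMax (Vv i) p) (hcol i)
    -- conclude
    have hmem' : rowMax Ubig * colMax Vbig ∈
        {t : ℝ | ∃ (r : ℕ) (U : Matrix {S // S ∈ F} (Fin r) ℝ) (V : Matrix (Fin r) α ℝ),
          incidenceMatrix F = U * V ∧ t = rowMax U * colMax V} :=
      ⟨Fintype.card ι, Ubig, Vbig, hfact, rfl⟩
    have hle : gamma2Sys F ≤ rowMax Ubig * colMax Vbig :=
      csInf_le (gamma2_bddBelow _) hmem'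
    calc gamma2Sys F ≤ rowMax Ubig * colMax Vbig := hle
      _ ≤ 1 * Real.sqrt (∑ i, (γ i + δ) ^ 2) :=
          mul_le_mul hrowb hcolb (colMax_nonneg Vbig) zero_le_one
      _ = Real.sqrt (∑ i, (γ i + δ) ^ 2) := one_mul _
  -- limit δ → 0⁺
  have hcont : Filter.Tendsto (fun δ : ℝ => Real.sqrt (∑ i, (γ i + δ) ^ 2))
      (nhdsWithin 0 (Set.Ioi 0)) (nhds (Real.sqrt (∑ i, (γ i) ^ 2))) := by
    have hc : Continuous fun δ : ℝ => Real.sqrt (∑ i, (γ i + δ) ^ 2) := by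
      apply Real.continuous_sqrt.comp
      exact continuous_finset_sum _ fun i _ => by fun_prop
    have := hc.tendsto 0
    simp only [add_zero] at this
    exact this.mono_left nhdsWithin_le_nhds
  exact ge_of_tendsto hcont (Filter.eventually_of_mem self_mem_nhdsWithin fun δ hδ => key δ hδ)
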